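/- Let K ∈ ℝ, a > 0, and let f: [0,a] → ℝ be C² with f ≥ 0, f not identically 0, and f''(t) + K f(t) ≤ 0 for all t ∈ [0,a]. Assume f(0) = 0, and assume that either f(a) = 0 or f'(a) ≥ 0. Then the zero set f⁻¹({0}) is contained in {0, a}, and sup over t ∈ f⁻¹({0}) of f'(t)² equals the maximum over t ∈ [0,a] of f'(t)² + K f(t)², and this common value is strictly positive. -/

import Mathlib

open Set

lemma anti_aux {c d : ℝ} (g g' : ℝ → ℝ) (hg : ContinuousOn g (Icc c d))
    (hd : ∀ x ∈ Ioo c d, HasDerivAt g (g' x) x) (hle : ∀ x ∈ Ioo c d, g' x ≤ 0) :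
    AntitoneOn g (Icc c d) := by
  apply antitoneOn_of_deriv_nonpos (convex_Icc c d) hg
  · intro x hx; rw [interior_Icc] at hx
    exact (hd x hx).differentiableAt.differentiableWithinAt
  · intro x hx; rw [interior_Icc] at hx; rw [(hd x hx).deriv]; exact hle x hx

lemma mono_aux {c d : ℝ} (g g' : ℝ → ℝ) (hg : ContinuousOn g (Icc c d))
    (hd : ∀ x ∈ Ioo c d, HasDerivAt g (g' x) x) (hle : ∀ x ∈ Ioo c d, 0 ≤ g' x) :
    MonotoneOn g (Icc c d) := by
  apply monotoneOn_of_deriv_nonneg (convex_Icc c d) hg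
  · intro x hx; rw [interior_Icc] at hx
    exact (hd x hx).differentiableAt.differentiableWithinAt
  · intro x hx; rw [interior_Icc] at hx; rw [(hd x hx).deriv]; exact hle x hx

lemma santi_aux {c d : ℝ} (g g' : ℝ → ℝ) (hg : ContinuousOn g (Icc c d))
    (hd : ∀ x ∈ Ioo c d, HasDerivAt g (g' x) x) (hle : ∀ x ∈ Ioo c d, g' x < 0) :
    StrictAntiOn g (Icc c d) := by
  apply strictAntiOn_of_deriv_neg (convex_Icc c d) hg
  intro x hx; rw [interior_Icc] at hx; rw [(hd x hx).deriv]; exact hle x hx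

lemma smono_aux {c d : ℝ} (g g' : ℝ → ℝ) (hg : ContinuousOn g (Icc c d))
    (hd : ∀ x ∈ Ioo c d, HasDerivAt g (g' x) x) (hle : ∀ x ∈ Ioo c d, 0 < g' x) :
    StrictMonoOn g (Icc c d) := by
  apply strictMonoOn_of_deriv_pos (convex_Icc c d) hg
  intro x hx; rw [interior_Icc] at hx; rw [(hd x hx).deriv]; exact hle x hx

lemma ndz (K a : ℝ) (f f' f'' : ℝ → ℝ)
    (hf' : ∀ t ∈ Set.Icc 0 a, HasDerivWithinAt f (f' t) (Set.Icc 0 a) t)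
    (hf'' : ∀ t ∈ Set.Icc 0 a, HasDerivWithinAt f' (f'' t) (Set.Icc 0 a) t)
    (hnonneg : ∀ t ∈ Set.Icc 0 a, 0 ≤ f t)
    (hineq : ∀ t ∈ Set.Icc 0 a, f'' t + K * f t ≤ 0)
    (t₀ : ℝ) (ht₀ : t₀ ∈ Set.Icc 0 a) (hz : f t₀ = 0) (hz' : f' t₀ = 0) :
    ∀ t ∈ Set.Icc 0 a, f t = 0 := by
  set c : ℝ := |K| + 1 with hc
  have hcpos : 0 < c := by positivity
  have hK2 : -K ≤ c ^ 2 := by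
    have h1 : -K ≤ |K| := neg_le_abs K
    nlinarith [abs_nonneg K]
  have hfd : ∀ x ∈ Ioo (0:ℝ) a, HasDerivAt f (f' x) x := fun x hx =>
    (hf' x (Ioo_subset_Icc_self hx)).hasDerivAt (Icc_mem_nhds hx.1 hx.2)
  have hf'd : ∀ x ∈ Ioo (0:ℝ) a, HasDerivAt f' (f'' x) x := fun x hx =>
    (hf'' x (Ioo_subset_Icc_self hx)).hasDerivAt (Icc_mem_nhds hx.1 hx.2)
  have hfc : ContinuousOn f (Icc 0 a) := fun x hx => (hf' x hx).continuousWithinAt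
  have hf'c : ContinuousOn f' (Icc 0 a) := fun x hx => (hf'' x hx).continuousWithinAt
  -- key second-order inequality: f'' ≤ c² f
  have hkey : ∀ x ∈ Icc (0:ℝ) a, f'' x ≤ c ^ 2 * f x := by
    intro x hx
    have h1 := hineq x hx
    have h2 := hnonneg x hx
    nlinarith
  intro t ht
  rcases le_or_gt t t₀ with hle | hlt
  · -- left side: use U = exp(-ct)(f' + cf), G = exp(ct) f
    have hsub : Icc t t₀ ⊆ Icc 0 a := Icc_subset_Icc ht.1 ht₀.2
    have hsub2 : Ioo t t₀ ⊆ Ioo 0 a := Ioo_subset_Ioo ht.1 ht₀.2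
    have hUanti : AntitoneOn (fun u => Real.exp (-(c*u)) * (f' u + c * f u)) (Icc t t₀) := by
      apply anti_aux _ (fun u => Real.exp (-(c*u)) * (f'' u - c^2 * f u))
      · exact ((Real.continuous_exp.comp (continuous_const.mul continuous_id).neg).continuousOn).mul
          ((hf'c.mono hsub).add (continuousOn_const.mul (hfc.mono hsub)))
      · intro x hx
        have hx' := hsub2 hx
        have he : HasDerivAt (fun u => Real.exp (-(c*u))) (-c * Real.exp (-(c*x))) x := by
          have := (((hasDerivAt_id x).const_mul c).neg).exp
          simpa [mul_comm] using this
        have hu : HasDerivAt (fun u => f' u + c * f u) (f'' x + c * f' x) x :=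
          (hf'd x hx').add ((hfd x hx').const_mul c)
        have := he.fun_mul hu
        exact this.congr_deriv (by ring)
      · intro x hx
        have hx' := hsub2 hx
        have := hkey x (Ioo_subset_Icc_self hx')
        have hexp : (0:ℝ) < Real.exp (-(c*x)) := Real.exp_pos _
        nlinarith
    have hUge : ∀ u ∈ Icc t t₀, 0 ≤ f' u + c * f u := by
      intro u hu
      have h1 := hUanti hu (right_mem_Icc.mpr hle) hu.2
      simp only [hz, hz', mul_zero, add_zero] at h1
      have hexp : (0:ℝ) < Real.exp (-(c*u)) := Real.exp_pos _
      nlinarith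
    have hGmono : MonotoneOn (fun u => Real.exp (c*u) * f u) (Icc t t₀) := by
      apply mono_aux _ (fun u => Real.exp (c*u) * (f' u + c * f u))
      · exact ((Real.continuous_exp.comp (continuous_const.mul continuous_id)).continuousOn).mul
          (hfc.mono hsub)
      · intro x hx
        have hx' := hsub2 hx
        have he : HasDerivAt (fun u => Real.exp (c*u)) (c * Real.exp (c*x)) x := by
          have := ((hasDerivAt_id x).const_mul c).exp
          simpa [mul_comm] using this
        have := he.fun_mul (hfd x hx')
        exact this.congr_deriv (by ring)
      · intro x hx
        have := hUge x (Ioo_subset_Icc_self hx)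
        have hexp : (0:ℝ) < Real.exp (c*x) := Real.exp_pos _
        positivity
    have h1 := hGmono (left_mem_Icc.mpr hle) (right_mem_Icc.mpr hle) hle
    simp only [hz, mul_zero] at h1
    have hexp : (0:ℝ) < Real.exp (c*t) := Real.exp_pos _
    have h2 := hnonneg t ht
    nlinarith
  · -- right side
    have hle := hlt.le
    have hsub : Icc t₀ t ⊆ Icc 0 a := Icc_subset_Icc ht₀.1 ht.2
    have hsub2 : Ioo t₀ t ⊆ Ioo 0 a := Ioo_subset_Ioo ht₀.1 ht.2
    have hWanti : AntitoneOn (fun u => Real.exp (c*u) * (f' u - c * f u)) (Icc t₀ t) := by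
      apply anti_aux _ (fun u => Real.exp (c*u) * (f'' u - c^2 * f u))
      · exact ((Real.continuous_exp.comp (continuous_const.mul continuous_id)).continuousOn).mul
          ((hf'c.mono hsub).sub (continuousOn_const.mul (hfc.mono hsub)))
      · intro x hx
        have hx' := hsub2 hx
        have he : HasDerivAt (fun u => Real.exp (c*u)) (c * Real.exp (c*x)) x := by
          have := ((hasDerivAt_id x).const_mul c).exp
          simpa [mul_comm] using this
        have hu : HasDerivAt (fun u => f' u - c * f u) (f'' x - c * f' x) x :=
          (hf'd x hx').sub ((hfd x hx').const_mul c)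
        have := he.fun_mul hu
        exact this.congr_deriv (by ring)
      · intro x hx
        have hx' := hsub2 hx
        have := hkey x (Ioo_subset_Icc_self hx')
        have hexp : (0:ℝ) < Real.exp (c*x) := Real.exp_pos _
        nlinarith
    have hWle : ∀ u ∈ Icc t₀ t, f' u - c * f u ≤ 0 := by
      intro u hu
      have h1 := hWanti (left_mem_Icc.mpr hle) hu hu.1
      simp only [hz, hz', mul_zero, sub_zero] at h1
      have hexp : (0:ℝ) < Real.exp (c*u) := Real.exp_pos _
      nlinarith
    have hFanti : AntitoneOn (fun u => Real.exp (-(c*u)) * f u) (Icc t₀ t) := by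
      apply anti_aux _ (fun u => Real.exp (-(c*u)) * (f' u - c * f u))
      · exact ((Real.continuous_exp.comp (continuous_const.mul continuous_id).neg).continuousOn).mul
          (hfc.mono hsub)
      · intro x hx
        have hx' := hsub2 hx
        have he : HasDerivAt (fun u => Real.exp (-(c*u))) (-c * Real.exp (-(c*x))) x := by
          have := (((hasDerivAt_id x).const_mul c).neg).exp
          simpa [mul_comm] using this
        have := he.fun_mul (hfd x hx')
        exact this.congr_deriv (by ring)
      · intro x hx
        have := hWle x (Ioo_subset_Icc_self hx)
        have hexp : (0:ℝ) < Real.exp (-(c*x)) := Real.exp_pos _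
        nlinarith
    have h1 := hFanti (left_mem_Icc.mpr hle) (right_mem_Icc.mpr hle) hle
    simp only [hz, mul_zero] at h1
    have hexp : (0:ℝ) < Real.exp (-(c*t)) := Real.exp_pos _
    have h2 := hnonneg t ht
    nlinarith

/-- For a nontrivial nonnegative `C²` solution of `f'' + K f ≤ 0` on `[0,a]` with `f(0) = 0`
and either `f(a) = 0` or `f'(a) ≥ 0` (sub-Neumann boundary condition), the zero set of `f`
is contained in `{0, a}` and `sup_{f⁻¹(0)} (f')²` equals `max_{[0,a]} ((f')² + K f²)`,
this common value being strictly positive. -/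
theorem statement_3 (K a : ℝ) (ha : 0 < a)
    (f f' f'' : ℝ → ℝ)
    (hf' : ∀ t ∈ Set.Icc 0 a, HasDerivWithinAt f (f' t) (Set.Icc 0 a) t)
    (hf'' : ∀ t ∈ Set.Icc 0 a, HasDerivWithinAt f' (f'' t) (Set.Icc 0 a) t)
    (hf''cont : ContinuousOn f'' (Set.Icc 0 a))
    (hnonneg : ∀ t ∈ Set.Icc 0 a, 0 ≤ f t)
    (hnontriv : ∃ t ∈ Set.Icc 0 a, f t ≠ 0)
    (hineq : ∀ t ∈ Set.Icc 0 a, f'' t + K * f t ≤ 0)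
    (h0 : f 0 = 0)
    (hbdry : f a = 0 ∨ 0 ≤ f' a) :
    (∀ t ∈ Set.Icc 0 a, f t = 0 → t = 0 ∨ t = a) ∧
    ∃ M : ℝ, 0 < M ∧
      IsGreatest ((fun t => f' t ^ 2 + K * f t ^ 2) '' Set.Icc 0 a) M ∧
      sSup ((fun t => f' t ^ 2) '' {t | t ∈ Set.Icc 0 a ∧ f t = 0}) = M := by
  have hfd : ∀ x ∈ Ioo (0:ℝ) a, HasDerivAt f (f' x) x := fun x hx =>
    (hf' x (Ioo_subset_Icc_self hx)).hasDerivAt (Icc_mem_nhds hx.1 hx.2)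
  have hf'd : ∀ x ∈ Ioo (0:ℝ) a, HasDerivAt f' (f'' x) x := fun x hx =>
    (hf'' x (Ioo_subset_Icc_self hx)).hasDerivAt (Icc_mem_nhds hx.1 hx.2)
  have hfc : ContinuousOn f (Icc 0 a) := fun x hx => (hf' x hx).continuousWithinAt
  have hf'c : ContinuousOn f' (Icc 0 a) := fun x hx => (hf'' x hx).continuousWithinAt
  have h0mem : (0:ℝ) ∈ Icc (0:ℝ) a := ⟨le_refl 0, ha.le⟩
  have hamem : a ∈ Icc (0:ℝ) a := ⟨ha.le, le_refl a⟩
  have hndz : ∀ t ∈ Set.Icc 0 a, f t = 0 → f' t ≠ 0 := by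
    intro t ht h1 h2
    obtain ⟨u, hu, hune⟩ := hnontriv
    exact hune (ndz K a f f' f'' hf' hf'' hnonneg hineq t ht h1 h2 u hu)
  have hzeros : ∀ t ∈ Set.Icc 0 a, f t = 0 → t = 0 ∨ t = a := by
    intro t ht hz
    by_contra hcon
    push_neg at hcon
    have htI : t ∈ Ioo (0:ℝ) a :=
      ⟨lt_of_le_of_ne ht.1 (Ne.symm hcon.1), lt_of_le_of_ne ht.2 hcon.2⟩
    have hmin : IsLocalMin f t := by
      filter_upwards [Icc_mem_nhds htI.1 htI.2] with u hu
      rw [hz]; exact hnonneg u hu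
    exact hndz t ht hz (hmin.hasDerivAt_eq_zero (hfd t htI))
  set E : ℝ → ℝ := fun t => f' t ^ 2 + K * f t ^ 2 with hEdef
  have hEval : ∀ x, E x = f' x ^ 2 + K * f x ^ 2 := fun x => rfl
  have hEc : ContinuousOn E (Icc 0 a) :=
    ((hf'c.pow 2).add (continuousOn_const.mul (hfc.pow 2)))
  have hEd : ∀ x ∈ Ioo (0:ℝ) a, HasDerivAt E (2 * f' x * (f'' x + K * f x)) x := by
    intro x hx
    have h1 : HasDerivAt (fun t => f' t ^ 2) (2 * f' x * f'' x) x := by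
      have := (hf'd x hx).fun_pow 2
      simpa [mul_comm] using this
    have h2 : HasDerivAt (fun t => K * f t ^ 2) (K * (2 * f x * f' x)) x := by
      have := ((hfd x hx).fun_pow 2).const_mul K
      simpa [mul_comm] using this
    have := h1.fun_add h2
    exact this.congr_deriv (by ring)
  obtain ⟨t₀, ht₀, hmaxOn⟩ := (isCompact_Icc).exists_isMaxOn (nonempty_Icc.mpr ha.le) hEc
  have hmax : ∀ u ∈ Icc (0:ℝ) a, E u ≤ E t₀ := fun u hu => hmaxOn hu
  have hE0 : E 0 = f' 0 ^ 2 := by rw [hEval, h0]; ring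
  have hE0pos : 0 < E 0 := by
    rw [hE0]
    have h1 := hndz 0 h0mem h0
    positivity
  have hMpos : 0 < E t₀ := lt_of_lt_of_le hE0pos (hmax 0 h0mem)
  -- sub1 : positive derivative at a max point forces E 0 = max
  have sub1 : ∀ t ∈ Icc (0:ℝ) a, (∀ u ∈ Icc (0:ℝ) a, E u ≤ E t) → 0 < f' t → E 0 = E t := by
    intro t ht hm hpos
    by_cases hS : ∃ u ∈ Icc (0:ℝ) t, f' u ≤ 0
    · exfalso
      have hIccsub : Icc (0:ℝ) t ⊆ Icc 0 a := Icc_subset_Icc le_rfl ht.2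
      have hScl : IsClosed {u | u ∈ Icc (0:ℝ) t ∧ f' u ≤ 0} := by
        have heq : {u | u ∈ Icc (0:ℝ) t ∧ f' u ≤ 0} = Icc (0:ℝ) t ∩ f' ⁻¹' (Iic 0) := by
          ext u; simp [Set.mem_Iic]
        rw [heq]
        exact (hf'c.mono hIccsub).preimage_isClosed_of_isClosed isClosed_Icc isClosed_Iic
      have hScp : IsCompact {u | u ∈ Icc (0:ℝ) t ∧ f' u ≤ 0} :=
        isCompact_Icc.of_isClosed_subset hScl (fun u hu => hu.1)
      obtain ⟨u₀, hu₀⟩ := hS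
      obtain ⟨s, hsS, hsub⟩ := hScp.exists_isGreatest ⟨u₀, hu₀⟩
      have hsmem : s ∈ Icc (0:ℝ) a := hIccsub hsS.1
      have hst : s < t := lt_of_le_of_ne hsS.1.2 (fun hh => by
        rw [hh] at hsS; linarith [hsS.2])
      have hpos' : ∀ v ∈ Ioc s t, 0 < f' v := by
        intro v hv
        by_contra hcc
        push_neg at hcc
        have : v ∈ {u | u ∈ Icc (0:ℝ) t ∧ f' u ≤ 0} :=
          ⟨⟨le_trans hsS.1.1 hv.1.le, hv.2⟩, hcc⟩
        linarith [hsub this, hv.1]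
      have hf's : f' s = 0 := by
        refine le_antisymm hsS.2 ?_
        have hcw : Filter.Tendsto f' (nhdsWithin s (Ioc s t)) (nhds (f' s)) :=
          ((hf'c s hsmem).mono (fun v hv => ⟨le_trans hsS.1.1 hv.1.le, le_trans hv.2 ht.2⟩))
        have hne : (nhdsWithin s (Ioc s t)).NeBot := by
          rw [← mem_closure_iff_nhdsWithin_neBot, closure_Ioc hst.ne]
          exact ⟨le_rfl, hst.le⟩
        exact ge_of_tendsto hcw (eventually_mem_nhdsWithin.mono (fun v hv => (hpos' v hv).le))
      have hEanti : AntitoneOn E (Icc s t) := by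
        apply anti_aux _ (fun x => 2 * f' x * (f'' x + K * f x))
          (hEc.mono (Icc_subset_Icc hsS.1.1 ht.2))
          (fun x hx => hEd x (Ioo_subset_Ioo hsS.1.1 ht.2 hx))
        intro x hx
        have h1 := hineq x (Icc_subset_Icc hsS.1.1 ht.2 (Ioo_subset_Icc_self hx))
        have h2 := hpos' x ⟨hx.1, hx.2.le⟩
        nlinarith
      have hEs : E s = E t :=
        le_antisymm (hm s hsmem) (hEanti (left_mem_Icc.mpr hst.le) (right_mem_Icc.mpr hst.le) hst.le)
      have hfs : 0 < f s := by
        rcases (hnonneg s hsmem).lt_or_eq with hh | hh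
        · exact hh
        · exact absurd hf's (hndz s hsmem hh.symm)
      have hEsval : E s = K * f s ^ 2 := by rw [hEval, hf's]; ring
      have hKpos : 0 < K := by
        have h1 : 0 < E t := lt_of_lt_of_le hE0pos (hm 0 h0mem)
        nlinarith [hEs, hEsval]
      have hmono : StrictMonoOn f (Icc s t) := by
        apply smono_aux _ f' (hfc.mono (Icc_subset_Icc hsS.1.1 ht.2))
          (fun x hx => hfd x (Ioo_subset_Ioo hsS.1.1 ht.2 hx))
        intro x hx; exact hpos' x ⟨hx.1, hx.2.le⟩
      have hflt : f s < f t := hmono (left_mem_Icc.mpr hst.le) (right_mem_Icc.mpr hst.le) hst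
      have hEt : E t = f' t ^ 2 + K * f t ^ 2 := hEval t
      have hsq : f s ^ 2 < f t ^ 2 := by nlinarith
      nlinarith [sq_nonneg (f' t), mul_pos hKpos (sub_pos.mpr hsq)]
    · push_neg at hS
      have hanti : AntitoneOn E (Icc 0 t) := by
        apply anti_aux _ (fun x => 2 * f' x * (f'' x + K * f x))
          (hEc.mono (Icc_subset_Icc le_rfl ht.2))
          (fun x hx => hEd x (Ioo_subset_Ioo le_rfl ht.2 hx))
        intro x hx
        have h1 := hineq x (Icc_subset_Icc le_rfl ht.2 (Ioo_subset_Icc_self hx))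
        have h2 := hS x (Ioo_subset_Icc_self hx)
        nlinarith
      exact le_antisymm (hm 0 h0mem)
        (hanti (left_mem_Icc.mpr ht.1) (right_mem_Icc.mpr ht.1) ht.1)
  -- sub2 : negative derivative at a max point forces f a = 0 and E a = max
  have sub2 : ∀ t ∈ Icc (0:ℝ) a, (∀ u ∈ Icc (0:ℝ) a, E u ≤ E t) → f' t < 0 →
      f a = 0 ∧ E a = E t := by
    intro t ht hm hneg
    by_cases hS : ∃ u ∈ Icc t a, 0 ≤ f' u
    · exfalso
      have hIccsub : Icc t a ⊆ Icc (0:ℝ) a := Icc_subset_Icc ht.1 le_rfl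
      have hScl : IsClosed {u | u ∈ Icc t a ∧ 0 ≤ f' u} := by
        have heq : {u | u ∈ Icc t a ∧ 0 ≤ f' u} = Icc t a ∩ f' ⁻¹' (Ici 0) := by
          ext u; simp [Set.mem_Ici]
        rw [heq]
        exact (hf'c.mono hIccsub).preimage_isClosed_of_isClosed isClosed_Icc isClosed_Ici
      have hScp : IsCompact {u | u ∈ Icc t a ∧ 0 ≤ f' u} :=
        isCompact_Icc.of_isClosed_subset hScl (fun u hu => hu.1)
      obtain ⟨u₀, hu₀⟩ := hS
      obtain ⟨s, hsS, hsub⟩ := hScp.exists_isLeast ⟨u₀, hu₀⟩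
      have hsmem : s ∈ Icc (0:ℝ) a := hIccsub hsS.1
      have hst : t < s := lt_of_le_of_ne hsS.1.1 (fun hh => by
        rw [← hh] at hsS; linarith [hsS.2])
      have hneg' : ∀ v ∈ Ico t s, f' v < 0 := by
        intro v hv
        by_contra hcc
        push_neg at hcc
        have : v ∈ {u | u ∈ Icc t a ∧ 0 ≤ f' u} :=
          ⟨⟨hv.1, le_trans hv.2.le hsS.1.2⟩, hcc⟩
        linarith [hsub this, hv.2]
      have hf's : f' s = 0 := by
        refine le_antisymm ?_ hsS.2
        have hcw : Filter.Tendsto f' (nhdsWithin s (Ico t s)) (nhds (f' s)) :=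
          ((hf'c s hsmem).mono (fun v hv => ⟨le_trans ht.1 hv.1, le_trans hv.2.le hsS.1.2⟩))
        have hne : (nhdsWithin s (Ico t s)).NeBot := by
          rw [← mem_closure_iff_nhdsWithin_neBot, closure_Ico hst.ne]
          exact ⟨hst.le, le_rfl⟩
        exact le_of_tendsto hcw (eventually_mem_nhdsWithin.mono (fun v hv => (hneg' v hv).le))
      have hEmono : MonotoneOn E (Icc t s) := by
        apply mono_aux _ (fun x => 2 * f' x * (f'' x + K * f x))
          (hEc.mono (Icc_subset_Icc ht.1 hsmem.2))
          (fun x hx => hEd x (Ioo_subset_Ioo ht.1 hsmem.2 hx))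
        intro x hx
        have h1 := hineq x (Icc_subset_Icc ht.1 hsmem.2 (Ioo_subset_Icc_self hx))
        have h2 := hneg' x ⟨hx.1.le, hx.2⟩
        nlinarith
      have hEs : E s = E t :=
        le_antisymm (hm s hsmem) (hEmono (left_mem_Icc.mpr hst.le) (right_mem_Icc.mpr hst.le) hst.le)
      have hfs : 0 < f s := by
        rcases (hnonneg s hsmem).lt_or_eq with hh | hh
        · exact hh
        · exact absurd hf's (hndz s hsmem hh.symm)
      have hEsval : E s = K * f s ^ 2 := by rw [hEval, hf's]; ring
      have hKpos : 0 < K := by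
        have h1 : 0 < E t := lt_of_lt_of_le hE0pos (hm 0 h0mem)
        nlinarith [hEs, hEsval]
      have hanti : StrictAntiOn f (Icc t s) := by
        apply santi_aux _ f' (hfc.mono (Icc_subset_Icc ht.1 hsmem.2))
          (fun x hx => hfd x (Ioo_subset_Ioo ht.1 hsmem.2 hx))
        intro x hx; exact hneg' x ⟨hx.1.le, hx.2⟩
      have hflt : f s < f t := hanti (left_mem_Icc.mpr hst.le) (right_mem_Icc.mpr hst.le) hst
      have hEt : E t = f' t ^ 2 + K * f t ^ 2 := hEval t
      have hsq : f s ^ 2 < f t ^ 2 := by nlinarith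
      nlinarith [sq_nonneg (f' t), mul_pos hKpos (sub_pos.mpr hsq)]
    · push_neg at hS
      have hmono : MonotoneOn E (Icc t a) := by
        apply mono_aux _ (fun x => 2 * f' x * (f'' x + K * f x))
          (hEc.mono (Icc_subset_Icc ht.1 le_rfl))
          (fun x hx => hEd x (Ioo_subset_Ioo ht.1 le_rfl hx))
        intro x hx
        have h1 := hineq x (Icc_subset_Icc ht.1 le_rfl (Ioo_subset_Icc_self hx))
        have h2 := hS x (Ioo_subset_Icc_self hx)
        nlinarith
      have hEa : E a = E t :=
        le_antisymm (hm a hamem) (hmono (left_mem_Icc.mpr ht.2) (right_mem_Icc.mpr ht.2) ht.2)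
      have hfa : f a = 0 := by
        rcases hbdry with hh | hh
        · exact hh
        · exact absurd hh (not_le.mpr (hS a (right_mem_Icc.mpr ht.2)))
      exact ⟨hfa, hEa⟩
  -- main disjunction: the max of E is attained at a zero of f
  have hdisj : E 0 = E t₀ ∨ (f a = 0 ∧ E a = E t₀) := by
    rcases lt_trichotomy (f' t₀) 0 with h | h | h
    · exact Or.inr (sub2 t₀ ht₀ hmax h)
    · -- f' t₀ = 0
      have hft₀ : 0 < f t₀ := by
        rcases (hnonneg t₀ ht₀).lt_or_eq with h1 | h1
        · exact h1
        · exact absurd h (hndz t₀ ht₀ h1.symm)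
      have hEt₀ : E t₀ = K * f t₀ ^ 2 := by rw [hEval, h]; ring
      have hKpos : 0 < K := by nlinarith [hMpos]
      have hf''neg : f'' t₀ < 0 := by
        have := hineq t₀ ht₀
        nlinarith
      have hev : f'' ⁻¹' (Iio 0) ∈ nhdsWithin t₀ (Icc 0 a) :=
        (hf''cont t₀ ht₀) (Iio_mem_nhds hf''neg)
      obtain ⟨ε, hε, hball⟩ := Metric.mem_nhdsWithin_iff.mp hev
      rcases lt_or_eq_of_le ht₀.2 with hta | hta
      · -- t₀ < a : go right
        set t₁ := min a (t₀ + ε/2) with ht₁def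
        have ht₀t₁ : t₀ < t₁ := lt_min hta (by linarith)
        have ht₁mem : t₁ ∈ Icc (0:ℝ) a := ⟨le_trans ht₀.1 ht₀t₁.le, min_le_left _ _⟩
        have hf''lt : ∀ x ∈ Ioo t₀ t₁, f'' x < 0 := by
          intro x hx
          apply hball
          constructor
          · rw [Metric.mem_ball, Real.dist_eq, abs_lt]
            have h1 := hx.1
            have h2 := lt_of_lt_of_le hx.2 (min_le_right _ _)
            constructor <;> linarith
          · exact ⟨le_trans ht₀.1 hx.1.le, le_trans hx.2.le ht₁mem.2⟩
        have hf'anti : StrictAntiOn f' (Icc t₀ t₁) :=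
          santi_aux _ f'' (hf'c.mono (Icc_subset_Icc ht₀.1 ht₁mem.2))
            (fun x hx => hf'd x (Ioo_subset_Ioo ht₀.1 ht₁mem.2 hx)) hf''lt
        have hf'neg : ∀ x ∈ Ioc t₀ t₁, f' x < 0 := by
          intro x hx
          have h1 := hf'anti (left_mem_Icc.mpr ht₀t₁.le) ⟨hx.1.le, hx.2⟩ hx.1
          rwa [h] at h1
        have hEmono : MonotoneOn E (Icc t₀ t₁) := by
          apply mono_aux _ (fun x => 2 * f' x * (f'' x + K * f x))
            (hEc.mono (Icc_subset_Icc ht₀.1 ht₁mem.2))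
            (fun x hx => hEd x (Ioo_subset_Ioo ht₀.1 ht₁mem.2 hx))
          intro x hx
          have h1 := hineq x (Icc_subset_Icc ht₀.1 ht₁mem.2 (Ioo_subset_Icc_self hx))
          have h2 := hf'neg x ⟨hx.1, hx.2.le⟩
          nlinarith
        have hEt₁ : E t₁ = E t₀ :=
          le_antisymm (hmax t₁ ht₁mem)
            (hEmono (left_mem_Icc.mpr ht₀t₁.le) (right_mem_Icc.mpr ht₀t₁.le) ht₀t₁.le)
        have hm₁ : ∀ u ∈ Icc (0:ℝ) a, E u ≤ E t₁ := fun u hu => (hmax u hu).trans hEt₁.ge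
        obtain ⟨hfa, hEa⟩ := sub2 t₁ ht₁mem hm₁ (hf'neg t₁ ⟨ht₀t₁, le_rfl⟩)
        exact Or.inr ⟨hfa, hEa.trans hEt₁⟩
      · -- t₀ = a : go left
        set t₁ := max 0 (a - ε/2) with ht₁def
        have ht₁a : t₁ < a := max_lt ha (by linarith)
        have ht₁mem : t₁ ∈ Icc (0:ℝ) a := ⟨le_max_left _ _, ht₁a.le⟩
        have hf''lt : ∀ x ∈ Ioo t₁ a, f'' x < 0 := by
          intro x hx
          apply hball
          constructor
          · rw [Metric.mem_ball, Real.dist_eq, abs_lt, hta]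
            have h2 : a - ε/2 < x := lt_of_le_of_lt (le_max_right 0 (a - ε/2)) hx.1
            have h3 := hx.2
            constructor <;> linarith
          · exact ⟨le_trans ht₁mem.1 hx.1.le, hx.2.le⟩
        have hfa0 : f' a = 0 := by rw [← hta]; exact h
        have hf'anti : StrictAntiOn f' (Icc t₁ a) :=
          santi_aux _ f'' (hf'c.mono (Icc_subset_Icc ht₁mem.1 le_rfl))
            (fun x hx => hf'd x (Ioo_subset_Ioo ht₁mem.1 le_rfl hx)) hf''lt
        have hf'pos : ∀ x ∈ Ico t₁ a, 0 < f' x := by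
          intro x hx
          have h1 := hf'anti ⟨hx.1, hx.2.le⟩ (right_mem_Icc.mpr ht₁a.le) hx.2
          rwa [hfa0] at h1
        have hEanti : AntitoneOn E (Icc t₁ a) := by
          apply anti_aux _ (fun x => 2 * f' x * (f'' x + K * f x))
            (hEc.mono (Icc_subset_Icc ht₁mem.1 le_rfl))
            (fun x hx => hEd x (Ioo_subset_Ioo ht₁mem.1 le_rfl hx))
          intro x hx
          have h1 := hineq x (Icc_subset_Icc ht₁mem.1 le_rfl (Ioo_subset_Icc_self hx))
          have h2 := hf'pos x ⟨hx.1.le, hx.2⟩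
          nlinarith
        have hEt₁ : E t₁ = E t₀ := by
          refine le_antisymm (hmax t₁ ht₁mem) ?_
          rw [hta]
          exact hEanti (left_mem_Icc.mpr ht₁a.le) (right_mem_Icc.mpr ht₁a.le) ht₁a.le
        have hm₁ : ∀ u ∈ Icc (0:ℝ) a, E u ≤ E t₁ := fun u hu => (hmax u hu).trans hEt₁.ge
        have h1 := sub1 t₁ ht₁mem hm₁ (hf'pos t₁ ⟨le_rfl, ht₁a⟩)
        exact Or.inl (h1.trans hEt₁)
    · exact Or.inl (sub1 t₀ ht₀ hmax h)
  refine ⟨hzeros, E t₀, hMpos, ⟨⟨t₀, ht₀, rfl⟩, ?_⟩, ?_⟩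
  · rintro y ⟨u, hu, rfl⟩
    exact hmax u hu
  · have hgr : IsGreatest ((fun t => f' t ^ 2) '' {t | t ∈ Icc 0 a ∧ f t = 0}) (E t₀) := by
      constructor
      · rcases hdisj with hh | ⟨hfa, hh⟩
        · refine ⟨0, ⟨h0mem, h0⟩, ?_⟩
          show f' 0 ^ 2 = E t₀
          rw [← hh, hE0]
        · refine ⟨a, ⟨hamem, hfa⟩, ?_⟩
          show f' a ^ 2 = E t₀
          rw [← hh, hEval, hfa]; ring
      · rintro y ⟨u, ⟨hu, hfu⟩, rfl⟩
        have h1 := hmax u hu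
        have h2 : f' u ^ 2 = E u := by rw [hEval, hfu]; ring
        show f' u ^ 2 ≤ E t₀
        rw [h2]; exact h1
    exact hgr.csSup_eq
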